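/- Let I be a tall P-ideal on ω. Then cov*(I) = ω₁ if and only if there is a cotower in I of height ω₁. -/

import Mathlib

open Set Cardinal

/-- `I` is a (proper) ideal on ω containing all finite sets. -/
def IsIdealOmega (I : Set (Set ℕ)) : Prop :=
  (∀ A ∈ I, ∀ B ⊆ A, B ∈ I) ∧ (∀ A ∈ I, ∀ B ∈ I, A ∪ B ∈ I) ∧
    (∀ A : Set ℕ, A.Finite → A ∈ I) ∧ Set.univ ∉ I

/-- `I` is tall: every infinite set contains an infinite member of `I`. -/
def IsTall (I : Set (Set ℕ)) : Prop :=
  ∀ X : Set ℕ, X.Infinite → ∃ A ∈ I, A ⊆ X ∧ A.Infinite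

/-- `I` is a P-ideal. -/
def IsPIdeal (I : Set (Set ℕ)) : Prop :=
  ∀ C : Set (Set ℕ), C.Countable → C ⊆ I → ∃ A ∈ I, ∀ c ∈ C, (c \ A).Finite

/-- cov*(I): least size of a family in `I` meeting every infinite set infinitely. -/
noncomputable def covStar (I : Set (Set ℕ)) : Cardinal :=
  sInf {c | ∃ D : Set (Set ℕ), D ⊆ I ∧ Cardinal.mk D = c ∧
    ∀ X : Set ℕ, X.Infinite → ∃ A ∈ D, (X ∩ A).Infinite}

universe u

lemma myComplInfinite {I : Set (Set ℕ)} (hI : IsIdealOmega I) {A : Set ℕ}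
    (hA : A ∈ I) : Aᶜ.Infinite := by
  obtain ⟨hdown, hunion, hfin, huniv⟩ := hI
  by_contra h
  rw [Set.not_infinite] at h
  exact huniv (by simpa [Set.union_compl_self] using hunion A hA Aᶜ (hfin _ h))

lemma myCountableIio {α : Ordinal.{u}} (h : α < (Cardinal.aleph.{u} 1).ord) :
    (Set.Iio α).Countable := by
  rw [← le_aleph0_iff_set_countable, Ordinal.mk_Iio_ordinal, ← Cardinal.lift_aleph0.{u+1,u},
    Cardinal.lift_le, ← Order.lt_succ_iff, Cardinal.succ_aleph0]
  exact Cardinal.lt_ord.mp h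

lemma myImageBound (A : Ordinal.{u} → Set ℕ) :
    #↥(A '' Set.Iio (Cardinal.aleph.{u} 1).ord) ≤ Cardinal.aleph 1 := by
  have h1 := Cardinal.mk_image_le_lift (f := A) (s := Set.Iio (Cardinal.aleph.{u} 1).ord)
  rw [Cardinal.lift_uzero, Ordinal.mk_Iio_ordinal, Cardinal.card_ord] at h1
  rw [← Cardinal.lift_le.{u+1}]
  apply h1.trans
  rw [Cardinal.lift_aleph, Cardinal.lift_aleph, Ordinal.lift_one, Ordinal.lift_one]

lemma myExistsCotower {I : Set (Set ℕ)} (hI : IsIdealOmega I) (hP : IsPIdeal I)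
    {D : Set (Set ℕ)} (hDI : D ⊆ I) (hDcard : Cardinal.mk D = Cardinal.aleph 1)
    (hDcov : ∀ X : Set ℕ, X.Infinite → ∃ A ∈ D, (X ∩ A).Infinite) :
    ∃ A : Ordinal.{u} → Set ℕ,
      (∀ α < (Cardinal.aleph.{u} 1).ord, A α ∈ I) ∧
      (∀ β α, β ≤ α → α < (Cardinal.aleph.{u} 1).ord → (A β \ A α).Finite) ∧
      ¬ ∃ Y : Set ℕ, Yᶜ.Infinite ∧ ∀ α < (Cardinal.aleph.{u} 1).ord, (A α \ Y).Finite := by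
  classical
  have hemb : Nonempty (↥D ↪ ↥(Set.Iio (Cardinal.aleph.{u} 1).ord)) := by
    rw [← Cardinal.lift_mk_le', Ordinal.mk_Iio_ordinal, Cardinal.card_ord, Cardinal.lift_uzero,
      hDcard, Cardinal.lift_aleph, Cardinal.lift_aleph, Ordinal.lift_one, Ordinal.lift_one]
  obtain ⟨f⟩ := hemb
  set Dfun : Ordinal.{u} → Set ℕ := fun β =>
    if h : ∃ d : ↥D, ((f d : ↥(Set.Iio (Cardinal.aleph.{u} 1).ord)) : Ordinal) = β then
      ((h.choose : ↥D) : Set ℕ) else ∅ with hDfun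
  have hDfunI : ∀ β, Dfun β ∈ I := by
    intro β
    rw [hDfun]
    dsimp only
    split
    · next h => exact hDI h.choose.2
    · exact hI.2.2.1 ∅ Set.finite_empty
  have hDfun_eq : ∀ d : ↥D,
      Dfun ((f d : ↥(Set.Iio (Cardinal.aleph.{u} 1).ord)) : Ordinal) = d := by
    intro d
    have h : ∃ d' : ↥D, ((f d' : ↥(Set.Iio (Cardinal.aleph.{u} 1).ord)) : Ordinal)
        = ((f d : ↥(Set.Iio (Cardinal.aleph.{u} 1).ord)) : Ordinal) := ⟨d, rfl⟩
    rw [hDfun]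
    dsimp only
    rw [dif_pos h]
    have h2 : h.choose = d := f.injective (Subtype.ext h.choose_spec)
    rw [h2]
  set F : ∀ α : Ordinal.{u}, (∀ β, β < α → Set ℕ) → Set ℕ := fun α rec =>
    if h : α < (Cardinal.aleph.{u} 1).ord then
      (hP ((Set.range (fun b : ↥(Set.Iio α) => rec b.1 b.2) ∪ Dfun '' Set.Iio α) ∩ I)
        (by
          apply Set.Countable.mono Set.inter_subset_left
          have hc : (Set.Iio α).Countable := myCountableIio h
          haveI : Countable ↥(Set.Iio α) := hc.to_subtype
          exact (Set.countable_range _).union (hc.image _))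
        Set.inter_subset_right).choose
    else ∅ with hF
  set A : Ordinal.{u} → Set ℕ := Ordinal.lt_wf.fix F with hA
  have hA_eq : ∀ α, A α = F α (fun β _ => A β) := fun α => WellFounded.fix_eq _ F α
  have key : ∀ α, α < (Cardinal.aleph.{u} 1).ord →
      A α ∈ I ∧ ∀ c ∈ (Set.range (fun b : ↥(Set.Iio α) => A b.1) ∪ Dfun '' Set.Iio α) ∩ I,
        (c \ A α).Finite := by
    intro α hα
    have h1 := hA_eq α
    rw [hF] at h1
    dsimp only at h1
    rw [dif_pos hα] at h1
    have hsub : ((Set.range (fun b : ↥(Set.Iio α) => A b.1) ∪ Dfun '' Set.Iio α) ∩ I) ⊆ I :=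
      Set.inter_subset_right
    have hcount : ((Set.range (fun b : ↥(Set.Iio α) => A b.1) ∪ Dfun '' Set.Iio α) ∩ I).Countable := by
      apply Set.Countable.mono Set.inter_subset_left
      have hc : (Set.Iio α).Countable := myCountableIio hα
      haveI : Countable ↥(Set.Iio α) := hc.to_subtype
      exact (Set.countable_range _).union (hc.image _)
    rw [h1]
    exact (hP _ hcount hsub).choose_spec
  have hAI : ∀ α < (Cardinal.aleph.{u} 1).ord, A α ∈ I := fun α h => (key α h).1
  have hmono : ∀ β α, β ≤ α → α < (Cardinal.aleph.{u} 1).ord → (A β \ A α).Finite := by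
    intro β α hβα hα
    rcases eq_or_lt_of_le hβα with rfl | h
    · simp
    · exact (key α hα).2 (A β) ⟨Or.inl ⟨⟨β, h⟩, rfl⟩, hAI β (h.trans hα)⟩
  have hDle : ∀ β α, β < α → α < (Cardinal.aleph.{u} 1).ord → (Dfun β \ A α).Finite := by
    intro β α h hα
    exact (key α hα).2 (Dfun β) ⟨Or.inr ⟨β, h, rfl⟩, hDfunI β⟩
  refine ⟨A, hAI, hmono, ?_⟩
  rintro ⟨Y, hYc, hY⟩
  obtain ⟨d, hd, hinf⟩ := hDcov Yᶜ hYc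
  set β : Ordinal.{u} := ((f ⟨d, hd⟩ : ↥(Set.Iio (Cardinal.aleph.{u} 1).ord)) : Ordinal) with hβ
  have hβlt : β < (Cardinal.aleph.{u} 1).ord := (f ⟨d, hd⟩).2
  have hβ1 : Order.succ β < (Cardinal.aleph.{u} 1).ord :=
    (Cardinal.isSuccLimit_ord (Cardinal.aleph0_le_aleph 1)).succ_lt hβlt
  have h1 : (d \ A (Order.succ β)).Finite := by
    have := hDle β (Order.succ β) (Order.lt_succ β) hβ1
    rwa [hDfun_eq ⟨d, hd⟩] at this
  have h2 : (A (Order.succ β) \ Y).Finite := hY _ hβ1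
  have h3 : (d \ Y).Finite := by
    apply (h1.union h2).subset
    intro x hx
    by_cases hxA : x ∈ A (Order.succ β)
    · exact Or.inr ⟨hxA, hx.2⟩
    · exact Or.inl ⟨hx.1, hxA⟩
  exact hinf (h3.subset fun x hx => ⟨hx.2, hx.1⟩)

theorem stmt3 (I : Set (Set ℕ)) (hI : IsIdealOmega I) (htall : IsTall I)
    (hP : IsPIdeal I) :
    covStar I = Cardinal.aleph 1 ↔
      ∃ A : Ordinal → Set ℕ,
        (∀ α < (Cardinal.aleph 1).ord, A α ∈ I) ∧
        (∀ β α, β ≤ α → α < (Cardinal.aleph 1).ord → (A β \ A α).Finite) ∧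
        ¬ ∃ Y : Set ℕ, Yᶜ.Infinite ∧ ∀ α < (Cardinal.aleph 1).ord, (A α \ Y).Finite := by
  unfold covStar
  set S : Set Cardinal := {c | ∃ D : Set (Set ℕ), D ⊆ I ∧ Cardinal.mk D = c ∧
    ∀ X : Set ℕ, X.Infinite → ∃ A ∈ D, (X ∩ A).Infinite} with hS
  have hSlb : ∀ c ∈ S, Cardinal.aleph 1 ≤ c := by
    rintro c ⟨D, hDI, rfl, hDcov⟩
    by_contra hlt
    rw [not_le, ← countable_iff_lt_aleph_one] at hlt
    obtain ⟨B, hBI, hB⟩ := hP D hlt hDI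
    obtain ⟨d, hd, hinf⟩ := hDcov Bᶜ (myComplInfinite hI hBI)
    exact hinf ((hB d hd).subset fun x hx => ⟨hx.2, hx.1⟩)
  constructor
  · intro hcov
    have hne : S.Nonempty := by
      by_contra h
      rw [Set.not_nonempty_iff_eq_empty] at h
      rw [h, Cardinal.sInf_empty] at hcov
      exact (Cardinal.aleph0_pos.trans Cardinal.aleph0_lt_aleph_one).ne hcov
    have hmem : Cardinal.aleph 1 ∈ S := hcov ▸ csInf_mem hne
    obtain ⟨D, hDI, hDcard, hDcov⟩ := hmem
    exact myExistsCotower hI hP hDI hDcard hDcov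
  · rintro ⟨A, hAI, hmono, hnops⟩
    have hmem : #↥(A '' Set.Iio (Cardinal.aleph 1).ord) ∈ S := by
      refine ⟨A '' Set.Iio (Cardinal.aleph 1).ord, ?_, rfl, ?_⟩
      · rintro x ⟨α, hα, rfl⟩
        exact hAI α hα
      · intro X hX
        by_contra h
        push_neg at h
        apply hnops
        refine ⟨Xᶜ, by rwa [compl_compl], fun α hα => ?_⟩
        have hfin := h (A α) ⟨α, hα, rfl⟩
        exact hfin.subset fun x hx => ⟨by simpa using hx.2, hx.1⟩
    apply le_antisymm
    · exact (csInf_le (OrderBot.bddBelow S) hmem).trans (myImageBound A)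
    · exact le_csInf ⟨_, hmem⟩ hSlb
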